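/- arXiv:1202.5145 — 3 statements merged into one kernel-verified Lean document; each statement's English description precedes it below -/
import Mathlib

section
/- Let s > 0, B ≥ 1, J ∈ ℕ, and let (u_{lk}) for l ≥ J, 1 ≤ k ≤ 2^l, be i.i.d. uniform on [−B, B]. Let ψ_{lk}(x) = 2^{l/2} ψ(2^l x − k) with ‖ψ‖₁ ≤ 1, and define U_s(x) = 1 + Σ_{l≥J} Σ_k 2^{−l(s+1/2)} u_{lk} ψ_{lk}(x). Let K_j be the wavelet projection onto resolution level j ≥ J, so that K_j(U_s) − U_s = Σ_{l≥j} Σ_k 2^{−l(s+1/2)} u_{lk} ψ_{lk}. Then for every ε > 0 and j ≥ J: P(‖K_j(U_s) − U_s‖_∞ < ε B 2^{−js}) ≤ ε^{2^j}. -/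
open MeasureTheory ProbabilityTheory

open Set Finset in

lemma aux_overlap (ψ : ℝ → ℝ) (M : ℝ) (hM0 : 0 ≤ M) (hψM : ∀ y, |ψ y| ≤ M)
    (hψsupp : ∀ y, y ∉ Set.Icc (0:ℝ) 1 → ψ y = 0) (t : ℝ) (N : ℕ) :
    ∑ k ∈ Finset.range N, |ψ (t - k)| ≤ 2 * M := by
  classical
  set a := ⌊t⌋₊ with ha
  have hzero : ∀ k ∈ Finset.range N, k ∉ Finset.range N ∩ ({a - 1, a} : Finset ℕ) →
      |ψ (t - k)| = 0 := by
    intro k hk hk2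
    rw [abs_eq_zero]
    apply hψsupp
    intro hmem
    apply hk2
    rw [Finset.mem_inter]
    refine ⟨hk, ?_⟩
    have h1 : (k:ℝ) ≤ t := by have := hmem.1; simp at this ⊢; linarith
    have h2 : t ≤ (k:ℝ) + 1 := by have := hmem.2; simp at this ⊢; linarith
    have hka : k ≤ a := Nat.le_floor h1
    have hak : a ≤ k + 1 := by
      have := Nat.floor_mono h2
      rwa [show ((k:ℝ)+1) = ((k+1 : ℕ) : ℝ) by push_cast; ring, Nat.floor_natCast] at this
    simp only [Finset.mem_insert, Finset.mem_singleton]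
    omega
  calc ∑ k ∈ Finset.range N, |ψ (t - k)|
      = ∑ k ∈ Finset.range N ∩ ({a-1, a} : Finset ℕ), |ψ (t-k)| :=
        (Finset.sum_subset (Finset.inter_subset_left) hzero).symm
    _ ≤ (Finset.range N ∩ ({a-1, a} : Finset ℕ)).card • M :=
        Finset.sum_le_card_nsmul _ _ _ (fun k _ => hψM _)
    _ ≤ 2 * M := by
        have hcard : (Finset.range N ∩ ({a-1, a} : Finset ℕ)).card ≤ 2 := by
          refine le_trans (Finset.card_le_card (Finset.inter_subset_right)) ?_
          exact le_trans (Finset.card_insert_le _ _) (by simp)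
        rw [nsmul_eq_mul]
        apply mul_le_mul_of_nonneg_right _ hM0
        exact_mod_cast hcard

lemma aux_zero (g : ℝ → ℝ) (hc : Continuous g)
    (hsupp : ∀ y, y ∉ Set.Icc (0:ℝ) 1 → g y = 0)
    {a b c : ℝ} (hab : a ≤ b) (h : Set.Ioc a b ∩ Set.Icc 0 1 ⊆ {c}) :
    ∫ y in a..b, g y = 0 := by
  rw [intervalIntegral.integral_of_le hab]
  apply MeasureTheory.integral_eq_zero_of_ae
  rw [Filter.EventuallyEq, MeasureTheory.ae_iff]
  simp only [Pi.zero_apply]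
  have hmeas : MeasurableSet {y : ℝ | g y ≠ 0} := (isOpen_ne_fun hc continuous_const).measurableSet
  rw [Measure.restrict_apply hmeas]
  refine measure_mono_null ?_ (Real.volume_singleton (a := c))
  intro y hy
  exact h ⟨hy.2, by_contra fun hm => hy.1 (hsupp y hm)⟩

lemma aux_cutoff (g : ℝ → ℝ) (hc : Continuous g)
    (hsupp : ∀ y, y ∉ Set.Icc (0:ℝ) 1 → g y = 0)
    {a b : ℝ} (ha : a ≤ 0) (hb : 1 ≤ b) : ∫ y in a..b, g y = ∫ y in (0:ℝ)..1, g y := by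
  have hi : ∀ c d : ℝ, IntervalIntegrable g volume c d := fun c d => hc.intervalIntegrable _ _
  rw [← intervalIntegral.integral_add_adjacent_intervals (hi a 0) (hi 0 b),
      ← intervalIntegral.integral_add_adjacent_intervals (hi 0 1) (hi 1 b)]
  rw [aux_zero g hc hsupp ha (c := 0) (by rintro y ⟨⟨_, h2⟩, ⟨h3, _⟩⟩; simp; linarith),
      aux_zero g hc hsupp hb (c := 1) (by rintro y ⟨⟨h1, _⟩, ⟨_, h4⟩⟩; simp; linarith)]
  ring

/-- for the random wavelet series prior with i.i.d. coefficients
`u_{lk}` uniform on `[−B,B]`, `ψ_{lk}(x) = 2^{l/2}ψ(2^l x − k)`, `‖ψ‖₁ ≤ 1`,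
and `K_j(U_s) − U_s = Σ_{l≥j} Σ_k 2^{−l(s+1/2)} u_{lk} ψ_{lk}`, one has
`P(‖K_j(U_s) − U_s‖_∞ < ε B 2^{−js}) ≤ ε^{2^j}`. -/
theorem stmt5 {Ω : Type*} [MeasurableSpace Ω] (P : Measure Ω) [IsProbabilityMeasure P]
    (s B ε : ℝ) (hs : 0 < s) (hB : 1 ≤ B) (hε : 0 < ε)
    (J j : ℕ) (hj : J ≤ j)
    (ψ : ℝ → ℝ) (hψc : Continuous ψ) (hψsupp : ∀ x, x ∉ Set.Icc (0:ℝ) 1 → ψ x = 0)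
    (hψ1 : ∫ x in (0:ℝ)..1, |ψ x| ≤ 1)
    (horth : ∀ l k l' k' : ℕ, k < 2^l → k' < 2^l' →
      ∫ x in (0:ℝ)..1,
        ((2:ℝ)^((l:ℝ)/2) * ψ ((2:ℝ)^l * x - k)) * ((2:ℝ)^((l':ℝ)/2) * ψ ((2:ℝ)^l' * x - k'))
        = if (l,k) = (l',k') then 1 else 0)
    (u : ℕ → ℕ → Ω → ℝ) (humeas : ∀ l k, Measurable (u l k))
    (hindep : iIndepFun (fun p : ℕ × ℕ => u p.1 p.2) P)
    (hunif : ∀ l k, Measure.map (u l k) P =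
      (ENNReal.ofReal (2*B))⁻¹ • volume.restrict (Set.Icc (-B) B))
    (D : Ω → ℝ → ℝ)
    (hD : D = fun ω x => ∑' l : ℕ, if j ≤ l then
      ∑ k ∈ Finset.range (2^l),
        (2:ℝ)^(-(l:ℝ)*(s+1/2)) * u l k ω * ((2:ℝ)^((l:ℝ)/2) * ψ ((2:ℝ)^l * x - k))
      else 0) :
    P {ω | (⨆ x : Set.Icc (0:ℝ) 1, |D ω x.1|) < ε * B * (2:ℝ)^(-(j:ℝ)*s)}
      ≤ ENNReal.ofReal (ε ^ (2^j)) := by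
  classical
  -- a bound for ψ
  obtain ⟨M0, hM0⟩ : ∃ C, ∀ x ∈ Set.Icc (0:ℝ) 1, ‖ψ x‖ ≤ C :=
    isCompact_Icc.exists_bound_of_continuousOn hψc.continuousOn
  set M : ℝ := max M0 0 with hMdef
  have hM : ∀ y, |ψ y| ≤ M := by
    intro y
    by_cases hy : y ∈ Set.Icc (0:ℝ) 1
    · exact le_trans (hM0 y hy) (le_max_left _ _)
    · simp [hψsupp y hy, hMdef]
  have hMnn : 0 ≤ M := le_max_right _ _
  -- geometric facts
  have hrpow_nat : ∀ l : ℕ, ((2:ℝ)^l : ℝ) = (2:ℝ)^((l:ℝ)) := fun l =>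
    (Real.rpow_natCast 2 l).symm
  have hcFpos : ∀ l : ℕ, (0:ℝ) < (2:ℝ)^(-(l:ℝ)*(s+1/2)) := fun l =>
    Real.rpow_pos_of_pos two_pos _
  have hchalf : ∀ l : ℕ, (2:ℝ)^(-(l:ℝ)*(s+1/2)) * (2:ℝ)^((l:ℝ)/2) = (2:ℝ)^(-(l:ℝ)*s) := by
    intro l
    rw [← Real.rpow_add two_pos]
    congr 1
    ring
  have hgeo : Summable (fun l : ℕ => (2*M*B) * (2:ℝ)^(-(l:ℝ)*s)) := by
    have h1 : ∀ l : ℕ, (2:ℝ)^(-(l:ℝ)*s) = ((2:ℝ)^(-s))^l := by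
      intro l
      rw [← Real.rpow_natCast ((2:ℝ)^(-s)) l, ← Real.rpow_mul (by norm_num)]
      congr 1
      ring
    simp_rw [h1]
    exact (summable_geometric_of_lt_one (by positivity)
      (Real.rpow_lt_one_of_one_lt_of_neg one_lt_two (by linarith))).mul_left _
  -- the key deterministic estimate
  have key : ∀ ω : Ω, (∀ l k : ℕ, |u l k ω| ≤ B) → ∀ k0 : ℕ, k0 < 2^j →
      (2:ℝ)^(-(j:ℝ)*s) * |u j k0 ω| ≤ ⨆ x : Set.Icc (0:ℝ) 1, |D ω x.1| := by
    intro ω hu k0 hk0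
    set F : ℕ → ℝ → ℝ := fun l x => if j ≤ l then
      ∑ k ∈ Finset.range (2^l),
        (2:ℝ)^(-(l:ℝ)*(s+1/2)) * u l k ω * ((2:ℝ)^((l:ℝ)/2) * ψ ((2:ℝ)^l * x - k))
      else 0 with hFdef
    have hDF : ∀ x, D ω x = ∑' l, F l x := by intro x; rw [hD]
    have hFcont : ∀ l, Continuous (F l) := by
      intro l
      by_cases hl : j ≤ l
      · simp only [hFdef, if_pos hl]
        exact continuous_finset_sum _ (fun k _ => by
          exact (continuous_const.mul (continuous_const.mul
            (hψc.comp ((continuous_const.mul continuous_id).sub continuous_const)))))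
      · simp only [hFdef, if_neg hl]; exact continuous_const
    have hF_bound : ∀ l x, |F l x| ≤ (2*M*B) * (2:ℝ)^(-(l:ℝ)*s) := by
      intro l x
      by_cases hl : j ≤ l
      · simp only [hFdef, if_pos hl]
        calc |∑ k ∈ Finset.range (2^l),
                (2:ℝ)^(-(l:ℝ)*(s+1/2)) * u l k ω * ((2:ℝ)^((l:ℝ)/2) * ψ ((2:ℝ)^l * x - k))|
            ≤ ∑ k ∈ Finset.range (2^l),
                |(2:ℝ)^(-(l:ℝ)*(s+1/2)) * u l k ω * ((2:ℝ)^((l:ℝ)/2) * ψ ((2:ℝ)^l * x - k))| :=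
              Finset.abs_sum_le_sum_abs _ _
          _ ≤ ∑ k ∈ Finset.range (2^l),
                ((2:ℝ)^(-(l:ℝ)*(s+1/2)) * (2:ℝ)^((l:ℝ)/2) * B) * |ψ ((2:ℝ)^l * x - k)| := by
              refine Finset.sum_le_sum (fun k _ => ?_)
              rw [abs_mul, abs_mul, abs_mul,
                abs_of_pos (hcFpos l), abs_of_pos (Real.rpow_pos_of_pos two_pos _)]
              calc (2:ℝ)^(-(l:ℝ)*(s+1/2)) * |u l k ω| * ((2:ℝ)^((l:ℝ)/2) * |ψ ((2:ℝ)^l * x - k)|)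
                  ≤ (2:ℝ)^(-(l:ℝ)*(s+1/2)) * B * ((2:ℝ)^((l:ℝ)/2) * |ψ ((2:ℝ)^l * x - k)|) := by
                    gcongr
                    exact hu l k
                _ = ((2:ℝ)^(-(l:ℝ)*(s+1/2)) * (2:ℝ)^((l:ℝ)/2) * B) * |ψ ((2:ℝ)^l * x - k)| := by
                    ring
          _ = ((2:ℝ)^(-(l:ℝ)*(s+1/2)) * (2:ℝ)^((l:ℝ)/2) * B) *
                ∑ k ∈ Finset.range (2^l), |ψ ((2:ℝ)^l * x - k)| := by
              rw [Finset.mul_sum]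
          _ ≤ ((2:ℝ)^(-(l:ℝ)*(s+1/2)) * (2:ℝ)^((l:ℝ)/2) * B) * (2 * M) := by
              refine mul_le_mul_of_nonneg_left ?_ (by positivity)
              exact aux_overlap ψ M hMnn hM hψsupp _ _
          _ = (2*M*B) * (2:ℝ)^(-(l:ℝ)*s) := by rw [hchalf l]; ring
      · simp only [hFdef, if_neg hl, abs_zero]
        positivity
    have hFsummable : ∀ x, Summable (fun l => F l x) := by
      intro x
      exact Summable.of_norm_bounded hgeo (fun l => by
        rw [Real.norm_eq_abs]; exact hF_bound l x)
    have hDb : ∀ x, |D ω x| ≤ ∑' l : ℕ, (2*M*B) * (2:ℝ)^(-(l:ℝ)*s) := by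
      intro x
      rw [hDF x]
      calc |∑' l, F l x| ≤ ∑' l, |F l x| := by
            simpa [Real.norm_eq_abs] using
              norm_tsum_le_tsum_norm (f := fun l => F l x)
                (by simpa [Real.norm_eq_abs] using (hFsummable x).abs)
        _ ≤ ∑' l : ℕ, (2*M*B) * (2:ℝ)^(-(l:ℝ)*s) :=
            Summable.tsum_le_tsum (fun l => hF_bound l x) (hFsummable x).abs hgeo
    have hBdd : BddAbove (Set.range fun x : Set.Icc (0:ℝ) 1 => |D ω x.1|) := by
      refine ⟨∑' l : ℕ, (2*M*B) * (2:ℝ)^(-(l:ℝ)*s), ?_⟩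
      rintro _ ⟨x, rfl⟩
      exact hDb _
    set S : ℝ := ⨆ x : Set.Icc (0:ℝ) 1, |D ω x.1| with hSdef
    have hle : ∀ x ∈ Set.Icc (0:ℝ) 1, |D ω x| ≤ S := fun x hx =>
      le_ciSup hBdd (⟨x, hx⟩ : Set.Icc (0:ℝ) 1)
    have hSnn : 0 ≤ S := le_trans (abs_nonneg _) (hle 0 (by norm_num))
    set Φ : ℝ → ℝ := fun x => (2:ℝ)^((j:ℝ)/2) * ψ ((2:ℝ)^j * x - k0) with hΦdef
    have hΦcont : Continuous Φ :=
      continuous_const.mul (hψc.comp ((continuous_const.mul continuous_id).sub continuous_const))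
    have hΦb : ∀ x, |Φ x| ≤ (2:ℝ)^((j:ℝ)/2) * M := by
      intro x
      rw [hΦdef, abs_mul, abs_of_pos (Real.rpow_pos_of_pos two_pos _)]
      exact mul_le_mul_of_nonneg_left (hM _) (by positivity)
    -- the coefficient identity
    have hcoef : ∫ x in Set.Ioc (0:ℝ) 1, D ω x * Φ x =
        (2:ℝ)^(-(j:ℝ)*(s+1/2)) * u j k0 ω := by
      have h1 : (fun x => D ω x * Φ x) = fun x => ∑' l, F l x * Φ x := by
        funext x
        rw [hDF x, tsum_mul_right]
      rw [h1, MeasureTheory.integral_tsum (f := fun l x => F l x * Φ x)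
        (fun l => ((hFcont l).mul hΦcont).aestronglyMeasurable)]
      · have hterm : ∀ l, (∫ x in Set.Ioc (0:ℝ) 1, F l x * Φ x)
            = if l = j then (2:ℝ)^(-(j:ℝ)*(s+1/2)) * u j k0 ω else 0 := by
          intro l
          by_cases hl : j ≤ l
          · simp only [hFdef, if_pos hl]
            rw [← intervalIntegral.integral_of_le zero_le_one]
            simp_rw [Finset.sum_mul]
            rw [intervalIntegral.integral_finset_sum (fun k _ => by
              apply Continuous.intervalIntegrable
              exact ((continuous_const.mul (continuous_const.mul
                (hψc.comp ((continuous_const.mul continuous_id).sub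
                  continuous_const)))).mul hΦcont))]
            have hterm2 : ∀ k ∈ Finset.range (2^l),
                (∫ x in (0:ℝ)..1,
                  ((2:ℝ)^(-(l:ℝ)*(s+1/2)) * u l k ω * ((2:ℝ)^((l:ℝ)/2) * ψ ((2:ℝ)^l * x - k)))
                    * Φ x)
                = (2:ℝ)^(-(l:ℝ)*(s+1/2)) * u l k ω * (if (l,k)=(j,k0) then 1 else 0) := by
              intro k hk
              have hre : ∀ x : ℝ,
                  ((2:ℝ)^(-(l:ℝ)*(s+1/2)) * u l k ω * ((2:ℝ)^((l:ℝ)/2) * ψ ((2:ℝ)^l * x - k)))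
                    * Φ x
                  = ((2:ℝ)^(-(l:ℝ)*(s+1/2)) * u l k ω) *
                    (((2:ℝ)^((l:ℝ)/2) * ψ ((2:ℝ)^l * x - k)) *
                     ((2:ℝ)^((j:ℝ)/2) * ψ ((2:ℝ)^j * x - k0))) := by
                intro x; rw [hΦdef]; ring
              simp_rw [hre]
              rw [intervalIntegral.integral_const_mul,
                horth l k j k0 (Finset.mem_range.mp hk) hk0]
            rw [Finset.sum_congr rfl hterm2]
            by_cases hlj : l = j
            · subst hlj
              simp [Prod.ext_iff, mul_ite, mul_one, mul_zero, Finset.sum_ite_eq',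
                Finset.mem_range, hk0]
            · rw [if_neg hlj]
              have : ∀ k, ((l,k) = (j,k0)) = False := by
                intro k; simp [Prod.ext_iff, hlj]
              simp [this]
          · simp only [hFdef, if_neg hl]
            rw [if_neg (by omega : ¬ l = j)]
            simp
        rw [tsum_congr hterm]
        exact tsum_ite_eq j _
      · -- finiteness of the tsum of lintegrals
        have hml : ∀ l, ∫⁻ x in Set.Ioc (0:ℝ) 1, ‖F l x * Φ x‖₊ ∂volume
            ≤ ENNReal.ofReal (((2*M*B) * (2:ℝ)^(-(l:ℝ)*s)) * ((2:ℝ)^((j:ℝ)/2) * M)) := by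
          intro l
          calc ∫⁻ x in Set.Ioc (0:ℝ) 1, ‖F l x * Φ x‖₊ ∂volume
              ≤ ∫⁻ _ in Set.Ioc (0:ℝ) 1,
                  ENNReal.ofReal (((2*M*B) * (2:ℝ)^(-(l:ℝ)*s)) * ((2:ℝ)^((j:ℝ)/2) * M))
                  ∂volume := by
                refine MeasureTheory.lintegral_mono (fun x => ?_)
                rw [show (‖F l x * Φ x‖₊ : ENNReal) = ENNReal.ofReal ‖F l x * Φ x‖ from (ofReal_norm _).symm]
                refine ENNReal.ofReal_le_ofReal ?_
                rw [Real.norm_eq_abs, abs_mul]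
                exact mul_le_mul (hF_bound l x) (hΦb x) (abs_nonneg _) (by positivity)
            _ = ENNReal.ofReal (((2*M*B) * (2:ℝ)^(-(l:ℝ)*s)) * ((2:ℝ)^((j:ℝ)/2) * M)) := by
                rw [MeasureTheory.lintegral_const, Measure.restrict_apply_univ,
                  Real.volume_Ioc]
                norm_num
        refine ne_of_lt (lt_of_le_of_lt (ENNReal.tsum_le_tsum hml) ?_)
        rw [← ENNReal.ofReal_tsum_of_nonneg (fun l => by positivity)
          (hgeo.mul_right _)]
        exact ENNReal.ofReal_lt_top
    -- upper bound via sup norm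
    have hψjint : ∫ x in (0:ℝ)..1, |ψ ((2:ℝ)^j * x - k0)| = ((2:ℝ)^j)⁻¹ * ∫ y in (0:ℝ)..1, |ψ y| := by
      rw [intervalIntegral.integral_comp_mul_sub (fun y => |ψ y|) (by positivity) (k0:ℝ)]
      rw [smul_eq_mul]
      congr 1
      rw [mul_zero, zero_sub, mul_one]
      refine aux_cutoff _ hψc.abs (fun y hy => by rw [hψsupp y hy, abs_zero]) ?_ ?_
      · simp
      · have : (k0:ℝ) + 1 ≤ (2:ℝ)^j := by exact_mod_cast Nat.succ_le_of_lt hk0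
        linarith
    have hub : |∫ x in Set.Ioc (0:ℝ) 1, D ω x * Φ x| ≤ S * (2:ℝ)^(-(j:ℝ)/2) := by
      have hInt : MeasureTheory.Integrable (fun x => S * |Φ x|)
          (volume.restrict (Set.Ioc (0:ℝ) 1)) :=
        (continuous_const.mul hΦcont.abs).integrableOn_Ioc
      calc |∫ x in Set.Ioc (0:ℝ) 1, D ω x * Φ x|
          ≤ ∫ x in Set.Ioc (0:ℝ) 1, S * |Φ x| := by
            rw [← Real.norm_eq_abs]
            refine MeasureTheory.norm_integral_le_of_norm_le hInt ?_
            filter_upwards [MeasureTheory.ae_restrict_mem measurableSet_Ioc] with x hx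
            rw [Real.norm_eq_abs, abs_mul]
            exact mul_le_mul_of_nonneg_right
              (hle x (Set.Ioc_subset_Icc_self hx)) (abs_nonneg _)
        _ = S * ∫ x in Set.Ioc (0:ℝ) 1, |Φ x| := MeasureTheory.integral_const_mul S _
        _ ≤ S * (2:ℝ)^(-(j:ℝ)/2) := by
            refine mul_le_mul_of_nonneg_left ?_ hSnn
            have : ∀ x, |Φ x| = (2:ℝ)^((j:ℝ)/2) * |ψ ((2:ℝ)^j * x - k0)| := by
              intro x
              rw [hΦdef, abs_mul, abs_of_pos (Real.rpow_pos_of_pos two_pos _)]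
            simp_rw [this]
            rw [← intervalIntegral.integral_of_le zero_le_one,
              intervalIntegral.integral_const_mul, hψjint]
            calc (2:ℝ)^((j:ℝ)/2) * (((2:ℝ)^j)⁻¹ * ∫ y in (0:ℝ)..1, |ψ y|)
                ≤ (2:ℝ)^((j:ℝ)/2) * (((2:ℝ)^j)⁻¹ * 1) := by
                  have hnn : (0:ℝ) ≤ ∫ y in (0:ℝ)..1, |ψ y| := by
                    rw [intervalIntegral.integral_of_le zero_le_one]
                    exact MeasureTheory.setIntegral_nonneg measurableSet_Ioc
                      (fun y _ => abs_nonneg _)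
                  gcongr
              _ = (2:ℝ)^(-(j:ℝ)/2) := by
                  rw [mul_one, hrpow_nat j, ← Real.rpow_neg (by norm_num),
                    ← Real.rpow_add two_pos]
                  congr 1
                  ring
    rw [hcoef] at hub
    rw [abs_mul, abs_of_pos (hcFpos j)] at hub
    have hmul := mul_le_mul_of_nonneg_right hub
      (le_of_lt (Real.rpow_pos_of_pos two_pos ((j:ℝ)/2)))
    calc (2:ℝ)^(-(j:ℝ)*s) * |u j k0 ω|
        = (2:ℝ)^(-(j:ℝ)*(s+1/2)) * |u j k0 ω| * (2:ℝ)^((j:ℝ)/2) := by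
          rw [mul_comm ((2:ℝ)^(-(j:ℝ)*(s+1/2))) (|u j k0 ω|), mul_assoc, hchalf j]
          ring
      _ ≤ S * (2:ℝ)^(-(j:ℝ)/2) * (2:ℝ)^((j:ℝ)/2) := hmul
      _ = S := by
          rw [mul_assoc, ← Real.rpow_add two_pos,
            show (-(j:ℝ)/2 + (j:ℝ)/2) = 0 by ring, Real.rpow_zero, mul_one]
  -- probability part
  by_cases hε1 : ε ≤ 1
  · set A : Set ℝ := Set.Ioo (-(ε*B)) (ε*B) with hA
    set G : Set Ω := ⋂ p : ℕ × ℕ, (u p.1 p.2) ⁻¹' (Set.Icc (-B) B) with hGdef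
    have hGc : P Gᶜ = 0 := by
      rw [hGdef, Set.compl_iInter]
      refine MeasureTheory.measure_iUnion_null (fun p => ?_)
      rw [← Set.preimage_compl,
        ← Measure.map_apply (humeas p.1 p.2) measurableSet_Icc.compl, hunif p.1 p.2,
        Measure.smul_apply, smul_eq_mul,
        Measure.restrict_apply measurableSet_Icc.compl]
      simp
    set T : Finset (ℕ × ℕ) := (Finset.range (2^j)).image (fun k => (j, k)) with hT
    have hsub : {ω | (⨆ x : Set.Icc (0:ℝ) 1, |D ω x.1|) < ε * B * (2:ℝ)^(-(j:ℝ)*s)}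
        ⊆ (⋂ p ∈ T, (u p.1 p.2) ⁻¹' A) ∪ Gᶜ := by
      intro ω hω
      by_cases hωG : ω ∈ G
      · left
        have hu : ∀ l k : ℕ, |u l k ω| ≤ B := by
          intro l k
          have := Set.mem_iInter.mp hωG (l, k)
          rw [Set.mem_preimage, Set.mem_Icc] at this
          exact abs_le.mpr this
        refine Set.mem_iInter₂.mpr (fun p hp => ?_)
        rw [hT, Finset.mem_image] at hp
        obtain ⟨k, hk, rfl⟩ := hp
        have hkey := key ω hu k (Finset.mem_range.mp hk)
        have hp2 : (0:ℝ) < (2:ℝ)^(-(j:ℝ)*s) := Real.rpow_pos_of_pos two_pos _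
        have hlt2 : (2:ℝ)^(-(j:ℝ)*s) * |u j k ω| < (2:ℝ)^(-(j:ℝ)*s) * (ε * B) := by
          calc (2:ℝ)^(-(j:ℝ)*s) * |u j k ω| < ε * B * (2:ℝ)^(-(j:ℝ)*s) :=
                lt_of_le_of_lt hkey hω
            _ = (2:ℝ)^(-(j:ℝ)*s) * (ε * B) := by ring
        have habs := abs_lt.mp ((mul_lt_mul_iff_right₀ hp2).mp hlt2)
        exact Set.mem_Ioo.mpr habs
      · right; exact hωG
    refine le_trans (measure_mono hsub) ?_
    refine le_trans (measure_union_le _ _) ?_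
    rw [hGc, add_zero]
    have hprod := hindep.measure_inter_preimage_eq_mul (S := T) (sets := fun _ => A)
      (fun p _ => measurableSet_Ioo)
    rw [hprod]
    have hfac : ∀ p : ℕ × ℕ, P ((u p.1 p.2) ⁻¹' A) ≤ ENNReal.ofReal ε := by
      intro p
      rw [← Measure.map_apply (humeas p.1 p.2) measurableSet_Ioo, hunif p.1 p.2,
        Measure.smul_apply, smul_eq_mul, Measure.restrict_apply measurableSet_Ioo]
      have h2B0 : ENNReal.ofReal (2*B) ≠ 0 := by
        simp only [ne_eq, ENNReal.ofReal_eq_zero, not_le]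
        linarith
      calc (ENNReal.ofReal (2*B))⁻¹ * volume (A ∩ Set.Icc (-B) B)
          ≤ (ENNReal.ofReal (2*B))⁻¹ * (ENNReal.ofReal ε * ENNReal.ofReal (2*B)) := by
            refine mul_le_mul_right ?_ _
            refine le_trans (measure_mono (Set.inter_subset_left)) ?_
            rw [hA, Real.volume_Ioo, ← ENNReal.ofReal_mul hε.le]
            exact le_of_eq (by congr 1; ring)
        _ = ENNReal.ofReal ε := by
            rw [← mul_assoc, mul_comm ((ENNReal.ofReal (2*B))⁻¹) (ENNReal.ofReal ε), mul_assoc,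
              ENNReal.inv_mul_cancel h2B0 ENNReal.ofReal_ne_top, mul_one]
    calc ∏ p ∈ T, P ((u p.1 p.2) ⁻¹' A)
        ≤ ∏ _p ∈ T, ENNReal.ofReal ε := Finset.prod_le_prod' (fun p _ => hfac p)
      _ = (ENNReal.ofReal ε) ^ T.card := Finset.prod_const _
      _ = ENNReal.ofReal (ε ^ (2^j)) := by
          rw [hT, Finset.card_image_of_injective _ (fun a b h => by injection h),
            Finset.card_range, ENNReal.ofReal_pow hε.le]
  · refine le_trans prob_le_one ?_
    rw [← ENNReal.ofReal_one]
    refine ENNReal.ofReal_le_ofReal (one_le_pow₀ (le_of_lt (not_le.mp hε1)))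
end

section
/- Let f be a continuous function on ℝ whose wavelet coefficients satisfy sup_k 2^{l/2}|β_{lk}(f)| ≤ B 2^{−ls} for all l ≥ 0 (f in a Hölder ball of radius B, smoothness s in the wavelet sense). Suppose moreover there exist ε > 0 and a level ℓ with ‖ψ‖_∞ Σ_{l ≥ ℓ'} 2^{l/2} sup_k |β_{lk}(f)| ≥ ε 2^{−ℓ's} for all ℓ' ≥ ℓ. Then there exists N ∈ ℕ depending only on ε, B, ψ, s such that for every ℓ' ≥ ℓ there is a level l̄ ∈ [ℓ', ℓ' + N − 1] with sup_k |β_{l̄ k}(f)| ≥ d(ε, B, ψ, s) 2^{−ℓ'(s+1/2)} for some constant d(ε, B, ψ, s) > 0. -/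
/-- pigeonhole over wavelet levels. Here `b l` plays the role of
`sup_k |β_{lk}(f)|` and `Cψ = ‖ψ‖_∞`. If `2^{l/2} b l ≤ B 2^{−ls}` for all `l`
and `Cψ Σ_{l ≥ ℓ'} 2^{l/2} b l ≥ ε 2^{−ℓ's}` for all `ℓ' ≥ ℓ`, then there is `N`
(depending only on `ε, B, Cψ, s`) and `d > 0` such that for every `ℓ' ≥ ℓ` some
level `l̄ ∈ [ℓ', ℓ'+N−1]` satisfies `b l̄ ≥ d 2^{−ℓ'(s+1/2)}`. -/
theorem stmt7 (s B ε Cψ : ℝ) (hs : 0 < s) (hB : 1 ≤ B) (hε : 0 < ε) (hCψ : 0 < Cψ)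
    (ℓ : ℕ) (b : ℕ → ℝ) (hb0 : ∀ l, 0 ≤ b l)
    (hbB : ∀ l : ℕ, (2:ℝ)^((l:ℝ)/2) * b l ≤ B * (2:ℝ)^(-(l:ℝ)*s))
    (hlow : ∀ ℓ' : ℕ, ℓ ≤ ℓ' →
      ε * (2:ℝ)^(-(ℓ':ℝ)*s)
        ≤ Cψ * ∑' l : ℕ, if ℓ' ≤ l then (2:ℝ)^((l:ℝ)/2) * b l else 0) :
    ∃ N : ℕ, 0 < N ∧ ∃ d > 0, ∀ ℓ' : ℕ, ℓ ≤ ℓ' →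
      ∃ lbar : ℕ, ℓ' ≤ lbar ∧ lbar ≤ ℓ' + N - 1 ∧
        d * (2:ℝ)^(-(ℓ':ℝ)*(s+1/2)) ≤ b lbar := by
  set r : ℝ := (2:ℝ)^(-s) with hr_def
  have hr0 : 0 < r := Real.rpow_pos_of_pos two_pos _
  have hr1 : r < 1 := Real.rpow_lt_one_of_one_lt_of_neg one_lt_two (by linarith)
  have hrl : ∀ l : ℕ, (2:ℝ)^(-(l:ℝ)*s) = r^l := by
    intro l
    rw [hr_def, ← Real.rpow_natCast ((2:ℝ)^(-s)) l, ← Real.rpow_mul (by norm_num)]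
    congr 1; ring
  set a : ℕ → ℝ := fun l => (2:ℝ)^((l:ℝ)/2) * b l with ha_def
  have ha0 : ∀ l, 0 ≤ a l := fun l =>
    mul_nonneg (Real.rpow_nonneg (by norm_num) _) (hb0 l)
  have haB : ∀ l, a l ≤ B * r^l := by
    intro l; rw [← hrl l]; exact hbB l
  have hgeom : Summable (fun l : ℕ => B * r^l) :=
    (summable_geometric_of_lt_one hr0.le hr1).mul_left B
  have hsa : Summable a := Summable.of_nonneg_of_le ha0 haB hgeom
  have hshift : ∀ m : ℕ, (∑' l : ℕ, if m ≤ l then a l else 0) = ∑' k : ℕ, a (k + m) := by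
    intro m
    have hinj : Function.Injective (fun k : ℕ => k + m) := add_left_injective m
    have hsupp : Function.support (fun l => if m ≤ l then a l else 0)
        ⊆ Set.range (fun k : ℕ => k + m) := by
      intro l hl
      by_cases h : m ≤ l
      · exact ⟨l - m, by simp; omega⟩
      · simp [Function.mem_support, h] at hl
    have := hinj.tsum_eq hsupp
    rw [← this]
    exact tsum_congr fun k => by simp [Nat.le_add_left]
  have htail : ∀ m : ℕ, (∑' k : ℕ, a (k + m)) ≤ B * r^m / (1 - r) := by
    intro m
    have h1 : Summable (fun k : ℕ => a (k + m)) :=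
      hsa.comp_injective (add_left_injective m)
    have h2 : Summable (fun k : ℕ => (B * r^m) * r^k) :=
      (summable_geometric_of_lt_one hr0.le hr1).mul_left _
    calc (∑' k : ℕ, a (k + m)) ≤ ∑' k : ℕ, (B * r^m) * r^k := by
          refine Summable.tsum_le_tsum (fun k => ?_) h1 h2
          exact le_of_le_of_eq (haB (k+m)) (by rw [pow_add]; ring)
      _ = (B * r^m) * ∑' k : ℕ, r^k := tsum_mul_left
      _ = B * r^m / (1-r) := by
          rw [tsum_geometric_of_lt_one hr0.le hr1]; field_simp
  obtain ⟨n, hn⟩ := exists_pow_lt_of_lt_one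
    (show (0:ℝ) < ε*(1-r)/(2*Cψ*B) from div_pos (mul_pos hε (by linarith)) (by positivity)) hr1
  set N := max n 1 with hN_def
  have hN1 : 1 ≤ N := le_max_right _ _
  have hN0 : (0:ℝ) < (N:ℝ) := by exact_mod_cast hN1
  have hrN : r^N ≤ r^n := pow_le_pow_of_le_one hr0.le hr1.le (le_max_left _ _)
  have hNtail : B * r^N / (1-r) ≤ ε / (2*Cψ) := by
    have h := lt_of_le_of_lt hrN hn
    rw [lt_div_iff₀ (by positivity : (0:ℝ) < 2*Cψ*B)] at h
    rw [div_le_div_iff₀ (by linarith) (by positivity)]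
    nlinarith
  refine ⟨N, hN1, ε / (2*Cψ*N) * (2:ℝ)^(-(N:ℝ)/2),
    mul_pos (div_pos hε (by positivity)) (Real.rpow_pos_of_pos two_pos _), ?_⟩
  intro ℓ' hℓ'
  set X := (2:ℝ)^(-(ℓ':ℝ)*s) with hX
  have hX0 : 0 < X := Real.rpow_pos_of_pos two_pos _
  set S := ∑ l ∈ Finset.Ico ℓ' (ℓ'+N), a l with hS_def
  have hS0 : 0 ≤ S := Finset.sum_nonneg fun l _ => ha0 l
  have hsplit : (∑' l : ℕ, if ℓ' ≤ l then a l else 0)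
      = S + ∑' k : ℕ, a (k + (ℓ'+N)) := by
    rw [hshift ℓ']
    have hsum : Summable (fun k : ℕ => a (k + ℓ')) :=
      hsa.comp_injective (add_left_injective ℓ')
    have := (Summable.sum_add_tsum_nat_add (f := fun k => a (k + ℓ')) N hsum).symm
    rw [this]
    congr 1
    · rw [hS_def, Finset.sum_Ico_eq_sum_range]
      simp only [Nat.add_sub_cancel_left]
      exact Finset.sum_congr rfl fun i _ => by rw [Nat.add_comm ℓ' i]
    · exact tsum_congr fun k => by rw [Nat.add_assoc, Nat.add_comm N ℓ']
  have hT : ε * X ≤ Cψ * (S + ∑' k : ℕ, a (k + (ℓ'+N))) := by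
    have h := hlow ℓ' hℓ'
    rwa [hsplit] at h
  have htail' : (∑' k : ℕ, a (k + (ℓ'+N))) ≤ (ε/(2*Cψ)) * X := by
    calc (∑' k : ℕ, a (k + (ℓ'+N))) ≤ B * r^(ℓ'+N)/(1-r) := htail _
      _ = (B*r^N/(1-r)) * r^ℓ' := by rw [pow_add]; ring
      _ ≤ (ε/(2*Cψ)) * r^ℓ' :=
          mul_le_mul_of_nonneg_right hNtail (pow_nonneg hr0.le _)
      _ = (ε/(2*Cψ)) * X := by rw [hX, hrl]
  have hS : ε/(2*Cψ) * X ≤ S := by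
    have h1 : Cψ * (∑' k : ℕ, a (k + (ℓ'+N))) ≤ ε/2 * X := by
      have := mul_le_mul_of_nonneg_left htail' hCψ.le
      calc Cψ * (∑' k : ℕ, a (k + (ℓ'+N))) ≤ Cψ * ((ε/(2*Cψ)) * X) := this
        _ = ε/2 * X := by field_simp
    have h2 : ε/2 * X ≤ Cψ * S := by nlinarith
    rw [div_mul_eq_mul_div, div_le_iff₀ (by positivity : (0:ℝ) < 2*Cψ)]
    nlinarith
  have hne : (Finset.Ico ℓ' (ℓ'+N)).Nonempty := by
    rw [Finset.nonempty_Ico]; omega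
  have hcard : (Finset.Ico ℓ' (ℓ'+N)).card = N := by rw [Nat.card_Ico]; omega
  have hsum_const : ∑ _l ∈ Finset.Ico ℓ' (ℓ'+N), S/(N:ℝ) = S := by
    rw [Finset.sum_const, hcard, nsmul_eq_mul]; field_simp
  obtain ⟨lbar, hmem, hge⟩ := Finset.exists_le_of_sum_le hne
    (le_of_eq hsum_const : ∑ _l ∈ Finset.Ico ℓ' (ℓ'+N), S/(N:ℝ) ≤ S)
  obtain ⟨hlb1, hlb2⟩ := Finset.mem_Ico.mp hmem
  refine ⟨lbar, hlb1, by omega, ?_⟩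
  have hlbar_le : (lbar:ℝ) ≤ (ℓ':ℝ) + N := by exact_mod_cast Nat.le_of_lt_succ (by omega)
  have hmono : (2:ℝ)^(-((ℓ':ℝ)+N)/2) ≤ (2:ℝ)^(-(lbar:ℝ)/2) :=
    Real.rpow_le_rpow_of_exponent_le one_le_two (by linarith)
  have hbval : b lbar = (2:ℝ)^(-(lbar:ℝ)/2) * a lbar := by
    rw [ha_def]
    simp only
    rw [← mul_assoc, ← Real.rpow_add two_pos]
    have h0 : -(lbar:ℝ)/2 + (lbar:ℝ)/2 = 0 := by ring
    rw [h0, Real.rpow_zero, one_mul]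
  have e1 : (2:ℝ)^(-(N:ℝ)/2) * (2:ℝ)^(-(ℓ':ℝ)*(s+1/2))
      = X * (2:ℝ)^(-(((ℓ':ℝ)+N))/2) := by
    rw [hX, ← Real.rpow_add two_pos, ← Real.rpow_add two_pos]
    congr 1; ring
  have heq : ε/(2*Cψ*N) * (2:ℝ)^(-(N:ℝ)/2) * (2:ℝ)^(-(ℓ':ℝ)*(s+1/2))
      = (ε/(2*Cψ) * X) / N * (2:ℝ)^(-(((ℓ':ℝ)+N))/2) := by
    rw [mul_assoc, e1]
    field_simp
  have key : (ε/(2*Cψ) * X) / N * (2:ℝ)^(-(((ℓ':ℝ)+N))/2)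
      ≤ S/N * (2:ℝ)^(-(lbar:ℝ)/2) := by
    have hA : (ε/(2*Cψ) * X) / N ≤ S / N :=
      div_le_div_of_nonneg_right hS hN0.le |>.trans_eq rfl
    exact mul_le_mul hA hmono (Real.rpow_nonneg (by norm_num) _)
      (div_nonneg hS0 hN0.le)
  have final2 : S/N * (2:ℝ)^(-(lbar:ℝ)/2) ≤ b lbar := by
    rw [hbval, mul_comm]
    exact mul_le_mul_of_nonneg_left hge (Real.rpow_nonneg (by norm_num) _)
  calc ε/(2*Cψ*N) * (2:ℝ)^(-(N:ℝ)/2) * (2:ℝ)^(-(ℓ':ℝ)*(s+1/2))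
      = (ε/(2*Cψ) * X) / N * (2:ℝ)^(-(((ℓ':ℝ)+N))/2) := heq
    _ ≤ S/N * (2:ℝ)^(-(lbar:ℝ)/2) := key
    _ ≤ b lbar := final2
end

section
/- Let t > s > 0, B ≥ 1, and let ψ_{ℓm}(x) = 2^{ℓ/2}ψ(2^ℓ x − m) be an orthonormal wavelet with ∫ψ = 0 and ‖ψ‖₁ ≤ 1, supported in the interior of [0,1]. Let f = 1 + 2^{−ℓ(s+1/2)} ψ_{ℓm}. Then: (a) f is a probability density with Hölder-s wavelet norm at most max(1, 1) ≤ B; (b) the projection K_{ℓ+1}(f) at level ℓ+1 equals f, i.e. ‖K_{ℓ+1}(f) − f‖_∞ = 0; (c) inf_{g ∈ Σ(t,B)} ‖f − g‖_∞ ≥ 2^{−ℓs} − B 2^{−ℓt}, which is at least c 2^{−ℓs} for some c > 0 once 2^{−ℓ(t−s)} ≤ 1/(2B). -/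
open intervalIntegral

/-- the key example `f = 1 + 2^{−ℓ(s+1/2)} ψ_{ℓm}` for an orthonormal,
mean-zero wavelet family `Ψ l k` with `‖Ψ l k‖₁ ≤ 2^{−l/2}`:
(a) `f` is a probability density with Hölder-`s` wavelet norm at most `B`;
(b) all wavelet coefficients of `f` at levels `l ≥ ℓ+1` vanish, i.e.
    `K_{ℓ+1}(f) = f` and `‖K_{ℓ+1}(f) − f‖_∞ = 0`;
(c) for every `g ∈ Σ(t,B)` (wavelet sense), `‖f − g‖_∞ ≥ 2^{−ℓs} − B 2^{−ℓt}`,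
    which is at least `(1/2) 2^{−ℓs}` once `2^{−ℓ(t−s)} ≤ 1/(2B)`. -/
theorem stmt9 (s t B : ℝ) (hs : 0 < s) (hst : s < t) (hB : 1 ≤ B)
    (ℓ m : ℕ) (hm : m < 2^ℓ)
    (Ψ : ℕ → ℕ → ℝ → ℝ) (hΨc : ∀ l k, Continuous (Ψ l k))
    (horth : ∀ l k l' k' : ℕ, k < 2^l → k' < 2^l' →
      ∫ x in (0:ℝ)..1, Ψ l k x * Ψ l' k' x = if (l,k) = (l',k') then 1 else 0)
    (hmean : ∀ l k : ℕ, k < 2^l → ∫ x in (0:ℝ)..1, Ψ l k x = 0)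
    (hL1 : ∀ l k : ℕ, k < 2^l → ∫ x in (0:ℝ)..1, |Ψ l k x| ≤ (2:ℝ)^(-(l:ℝ)/2))
    (f : ℝ → ℝ) (hf : f = fun x => 1 + (2:ℝ)^(-(ℓ:ℝ)*(s+1/2)) * Ψ ℓ m x)
    (hbd : ∀ x : ℝ, (2:ℝ)^(-(ℓ:ℝ)*(s+1/2)) * |Ψ ℓ m x| ≤ 1) :
    ((∀ x ∈ Set.Icc (0:ℝ) 1, 0 ≤ f x) ∧ ∫ x in (0:ℝ)..1, f x = 1)
    ∧ (∀ l k : ℕ, k < 2^l →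
        (2:ℝ)^((l:ℝ)*(s+1/2)) * |∫ x in (0:ℝ)..1, f x * Ψ l k x| ≤ B)
    ∧ (∀ l k : ℕ, k < 2^l → ℓ + 1 ≤ l → ∫ x in (0:ℝ)..1, f x * Ψ l k x = 0)
    ∧ (∀ g : ℝ → ℝ, Continuous g →
        (∀ l k : ℕ, k < 2^l →
          (2:ℝ)^((l:ℝ)*(t+1/2)) * |∫ x in (0:ℝ)..1, g x * Ψ l k x| ≤ B) →
        (2:ℝ)^(-(ℓ:ℝ)*s) - B * (2:ℝ)^(-(ℓ:ℝ)*t)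
          ≤ ⨆ x : Set.Icc (0:ℝ) 1, |f x.1 - g x.1|)
    ∧ ((2:ℝ)^(-(ℓ:ℝ)*(t-s)) ≤ 1/(2*B) → ∀ g : ℝ → ℝ, Continuous g →
        (∀ l k : ℕ, k < 2^l →
          (2:ℝ)^((l:ℝ)*(t+1/2)) * |∫ x in (0:ℝ)..1, g x * Ψ l k x| ≤ B) →
        (1/2) * (2:ℝ)^(-(ℓ:ℝ)*s) ≤ ⨆ x : Set.Icc (0:ℝ) 1, |f x.1 - g x.1|) := by
  have hfc : Continuous f := by
    rw [hf]; exact continuous_const.add (continuous_const.mul (hΨc ℓ m))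
  set ε : ℝ := (2:ℝ)^(-(ℓ:ℝ)*(s+1/2)) with hεdef
  have hεpos : 0 < ε := Real.rpow_pos_of_pos two_pos _
  have key : ∀ l k : ℕ, k < 2^l → ∫ x in (0:ℝ)..1, f x * Ψ l k x
      = if (l,k) = (ℓ,m) then ε else 0 := by
    intro l k hk
    have e : (fun x => f x * Ψ l k x)
        = fun x => Ψ l k x + ε * (Ψ ℓ m x * Ψ l k x) := by
      funext x; rw [hf]; ring
    rw [e, intervalIntegral.integral_add (f := fun x => Ψ l k x)
      (g := fun x => ε * (Ψ ℓ m x * Ψ l k x)) ((hΨc l k).intervalIntegrable _ _)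
      ((continuous_const.mul ((hΨc ℓ m).mul (hΨc l k))).intervalIntegrable _ _),
      intervalIntegral.integral_const_mul, hmean l k hk, horth ℓ m l k hm hk]
    rcases eq_or_ne (l,k) (ℓ,m) with h | h
    · simp [h]
    · simp [h, Ne.symm h]
  -- part (d) as a separate have, reused in (e)
  have hD : ∀ g : ℝ → ℝ, Continuous g →
      (∀ l k : ℕ, k < 2^l →
        (2:ℝ)^((l:ℝ)*(t+1/2)) * |∫ x in (0:ℝ)..1, g x * Ψ l k x| ≤ B) →
      (2:ℝ)^(-(ℓ:ℝ)*s) - B * (2:ℝ)^(-(ℓ:ℝ)*t)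
        ≤ ⨆ x : Set.Icc (0:ℝ) 1, |f x.1 - g x.1| := by
    intro g hg hgB
    set S : ℝ := ⨆ x : Set.Icc (0:ℝ) 1, |f x.1 - g x.1| with hSdef
    have hbdd : BddAbove (Set.range fun x : Set.Icc (0:ℝ) 1 => |f x.1 - g x.1|) := by
      obtain ⟨M, hM⟩ := isCompact_Icc.exists_bound_of_continuousOn
        ((hfc.sub hg).continuousOn (s := Set.Icc (0:ℝ) 1))
      refine ⟨M, ?_⟩
      rintro _ ⟨x, rfl⟩
      simpa [Real.norm_eq_abs] using hM x.1 x.2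
    have hS : ∀ x ∈ Set.Icc (0:ℝ) 1, |f x - g x| ≤ S := fun x hx =>
      le_ciSup hbdd ⟨x, hx⟩
    have hS0 : 0 ≤ S :=
      le_trans (abs_nonneg _) (hS 0 (by norm_num))
    set β : ℝ := ∫ x in (0:ℝ)..1, g x * Ψ ℓ m x with hβdef
    have hQ : (0:ℝ) < (2:ℝ)^(-(ℓ:ℝ)*(t+1/2)) := Real.rpow_pos_of_pos two_pos _
    have iP : (2:ℝ)^(-(ℓ:ℝ)*(t+1/2)) * (2:ℝ)^((ℓ:ℝ)*(t+1/2)) = 1 := by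
      rw [← Real.rpow_add two_pos,
        show -(ℓ:ℝ)*(t+1/2) + (ℓ:ℝ)*(t+1/2) = 0 by ring, Real.rpow_zero]
    have hβ : |β| ≤ B * (2:ℝ)^(-(ℓ:ℝ)*(t+1/2)) := by
      have h := mul_le_mul_of_nonneg_left (hgB ℓ m hm) hQ.le
      rw [← mul_assoc, iP, one_mul] at h
      linarith [h]
    have hval : ∫ x in (0:ℝ)..1, (f x - g x) * Ψ ℓ m x = ε - β := by
      have e : (fun x => (f x - g x) * Ψ ℓ m x)
          = fun x => f x * Ψ ℓ m x - g x * Ψ ℓ m x := by funext x; ring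
      rw [e, intervalIntegral.integral_sub (f := fun x => f x * Ψ ℓ m x)
        (g := fun x => g x * Ψ ℓ m x)
        ((hfc.mul (hΨc ℓ m)).intervalIntegrable _ _)
        ((hg.mul (hΨc ℓ m)).intervalIntegrable _ _), key ℓ m hm, if_pos rfl]
    have hint : |∫ x in (0:ℝ)..1, (f x - g x) * Ψ ℓ m x|
        ≤ S * (2:ℝ)^(-(ℓ:ℝ)/2) := by
      calc |∫ x in (0:ℝ)..1, (f x - g x) * Ψ ℓ m x|
          ≤ ∫ x in (0:ℝ)..1, |(f x - g x) * Ψ ℓ m x| :=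
            intervalIntegral.abs_integral_le_integral_abs (by norm_num)
        _ ≤ ∫ x in (0:ℝ)..1, S * |Ψ ℓ m x| := by
            refine intervalIntegral.integral_mono_on (by norm_num)
              (((hfc.sub hg).mul (hΨc ℓ m)).abs.intervalIntegrable _ _)
              ((continuous_const.mul (hΨc ℓ m).abs).intervalIntegrable _ _) ?_
            intro x hx
            rw [abs_mul]
            exact mul_le_mul_of_nonneg_right (hS x hx) (abs_nonneg _)
        _ = S * ∫ x in (0:ℝ)..1, |Ψ ℓ m x| :=
            intervalIntegral.integral_const_mul _ _
        _ ≤ S * (2:ℝ)^(-(ℓ:ℝ)/2) :=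
            mul_le_mul_of_nonneg_left (hL1 ℓ m hm) hS0
    rw [hval] at hint
    have i1 : (2:ℝ)^(-(ℓ:ℝ)*s) * (2:ℝ)^(-(ℓ:ℝ)/2) = ε := by
      rw [hεdef, ← Real.rpow_add two_pos]; congr 1; ring
    have i2 : (2:ℝ)^(-(ℓ:ℝ)*t) * (2:ℝ)^(-(ℓ:ℝ)/2) = (2:ℝ)^(-(ℓ:ℝ)*(t+1/2)) := by
      rw [← Real.rpow_add two_pos]; congr 1; ring
    have hfin : ((2:ℝ)^(-(ℓ:ℝ)*s) - B * (2:ℝ)^(-(ℓ:ℝ)*t)) * (2:ℝ)^(-(ℓ:ℝ)/2)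
        ≤ S * (2:ℝ)^(-(ℓ:ℝ)/2) := by
      have expand : ((2:ℝ)^(-(ℓ:ℝ)*s) - B * (2:ℝ)^(-(ℓ:ℝ)*t)) * (2:ℝ)^(-(ℓ:ℝ)/2)
          = ε - B * (2:ℝ)^(-(ℓ:ℝ)*(t+1/2)) := by
        rw [sub_mul, mul_assoc, i1, i2]
      rw [expand]
      linarith [le_abs_self (ε - β), le_abs_self β]
    exact le_of_mul_le_mul_right hfin (Real.rpow_pos_of_pos two_pos _)
  refine ⟨⟨?_, ?_⟩, ?_, ?_, hD, ?_⟩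
  · -- nonnegativity
    intro x _
    rw [hf]
    have h1 : ε * |Ψ ℓ m x| ≤ 1 := hbd x
    have h2 : -(ε * Ψ ℓ m x) ≤ |ε * Ψ ℓ m x| := neg_le_abs _
    have h3 : |ε * Ψ ℓ m x| = ε * |Ψ ℓ m x| := by
      rw [abs_mul, abs_of_pos hεpos]
    simp only
    linarith
  · -- integral = 1
    rw [hf]
    beta_reduce
    rw [intervalIntegral.integral_add (f := fun _ => (1:ℝ)) (g := fun x => ε * Ψ ℓ m x)
      (intervalIntegrable_const)
      ((continuous_const.mul (hΨc ℓ m)).intervalIntegrable _ _),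
      intervalIntegral.integral_const_mul, hmean ℓ m hm]
    simp
  · -- Hölder norm bound
    intro l k hk
    rw [key l k hk]
    split_ifs with h
    · have hl : l = ℓ := (Prod.ext_iff.mp h).1
      rw [abs_of_pos hεpos, hεdef, hl, ← Real.rpow_add two_pos,
        show (ℓ:ℝ)*(s+1/2) + -(ℓ:ℝ)*(s+1/2) = 0 by ring, Real.rpow_zero]
      exact hB
    · simp only [abs_zero, mul_zero]
      linarith
  · -- vanishing coefficients at high levels
    intro l k hk hl
    rw [key l k hk, if_neg]
    intro h
    have := (Prod.ext_iff.mp h).1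
    omega
  · -- part (e)
    intro hsmall g hg hgB
    have hd := hD g hg hgB
    have hpos : (0:ℝ) < (2:ℝ)^(-(ℓ:ℝ)*s) := Real.rpow_pos_of_pos two_pos _
    have i3 : (2:ℝ)^(-(ℓ:ℝ)*(t-s)) * (2:ℝ)^(-(ℓ:ℝ)*s) = (2:ℝ)^(-(ℓ:ℝ)*t) := by
      rw [← Real.rpow_add two_pos]; congr 1; ring
    have hB0 : (0:ℝ) < 2 * B := by linarith
    have hsmall' : (2:ℝ)^(-(ℓ:ℝ)*(t-s)) * (2*B) ≤ 1 :=
      (le_div_iff₀ hB0).mp hsmall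
    have h4 : B * (2:ℝ)^(-(ℓ:ℝ)*t) ≤ (1/2) * (2:ℝ)^(-(ℓ:ℝ)*s) := by
      nlinarith [mul_le_mul_of_nonneg_right hsmall' hpos.le]
    linarith
end
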